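/- Let Λ and Γ be separably equivalent via _ΛM_Γ and _ΓN_Λ, let 𝒞 be an additive subcategory of Mod Λ closed under isomorphisms, and let 𝒟 be a subcategory of Mod Γ with T_N(𝒞) ⊆ 𝒟 and T_M(𝒟) ⊆ 𝒞. If a Γ-module L lies in ⊥(T_N(𝒞)), then L lies in ⊥𝒟. -/

import Mathlib

open TensorProduct CategoryTheory MulOpposite

noncomputable section

/-! ## The balanced tensor product over a (possibly noncommutative) ring -/

/-- The submodule of relations defining the balanced tensor product `A ⊗[R] B`,
where `A` is an `(S,R)`-bimodule and `B` is a left `R`-module. -/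
def BTrel (S R : Type) [Ring S] [Ring R]
    (A : Type) [AddCommGroup A] [Module S A] [Module Rᵐᵒᵖ A] [SMulCommClass Rᵐᵒᵖ S A]
    (B : Type) [AddCommGroup B] [Module R B] : Submodule S (A ⊗[ℤ] B) :=
  Submodule.span S
    {x | ∃ (r : R) (a : A) (b : B), x = (op r • a) ⊗ₜ[ℤ] b - a ⊗ₜ[ℤ] (r • b)}

/-- The balanced tensor product `A ⊗[R] B` of a right `R`-module `A` (with a compatible left
`S`-action making it an `(S,R)`-bimodule) and a left `R`-module `B`; it is a left `S`-module. -/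
def BT (S R : Type) [Ring S] [Ring R]
    (A : Type) [AddCommGroup A] [Module S A] [Module Rᵐᵒᵖ A] [SMulCommClass Rᵐᵒᵖ S A]
    (B : Type) [AddCommGroup B] [Module R B] : Type :=
  (A ⊗[ℤ] B) ⧸ BTrel S R A B

instance (S R : Type) [Ring S] [Ring R]
    (A : Type) [AddCommGroup A] [Module S A] [Module Rᵐᵒᵖ A] [SMulCommClass Rᵐᵒᵖ S A]
    (B : Type) [AddCommGroup B] [Module R B] : AddCommGroup (BT S R A B) :=
  inferInstanceAs (AddCommGroup ((A ⊗[ℤ] B) ⧸ BTrel S R A B))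

instance (S R : Type) [Ring S] [Ring R]
    (A : Type) [AddCommGroup A] [Module S A] [Module Rᵐᵒᵖ A] [SMulCommClass Rᵐᵒᵖ S A]
    (B : Type) [AddCommGroup B] [Module R B] : Module S (BT S R A B) :=
  inferInstanceAs (Module S ((A ⊗[ℤ] B) ⧸ BTrel S R A B))

/-- The elementary tensor `a ⊗ b` in the balanced tensor product `A ⊗[R] B`. -/
def btmul (S R : Type) [Ring S] [Ring R]
    (A : Type) [AddCommGroup A] [Module S A] [Module Rᵐᵒᵖ A] [SMulCommClass Rᵐᵒᵖ S A]
    (B : Type) [AddCommGroup B] [Module R B] (a : A) (b : B) : BT S R A B :=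
  Submodule.Quotient.mk (a ⊗ₜ[ℤ] b)

/-- Functoriality of the balanced tensor product in the second variable:
this is the map `A ⊗[R] f : A ⊗[R] B ⟶ A ⊗[R] B'` induced by `f : B ⟶ B'`. -/
def btmap (S R : Type) [Ring S] [Ring R]
    (A : Type) [AddCommGroup A] [Module S A] [Module Rᵐᵒᵖ A] [SMulCommClass Rᵐᵒᵖ S A]
    {B B' : Type} [AddCommGroup B] [Module R B] [AddCommGroup B'] [Module R B']
    (f : B →ₗ[R] B') : BT S R A B →ₗ[S] BT S R A B' :=
  Submodule.mapQ _ _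
    (TensorProduct.AlgebraTensorModule.map (LinearMap.id (R := S) (M := A))
      (f.restrictScalars ℤ)) <| by
    rw [BTrel, Submodule.span_le]
    rintro x ⟨r, a, b, rfl⟩
    simp only [SetLike.mem_coe, Submodule.mem_comap, map_sub,
      TensorProduct.AlgebraTensorModule.map_tmul, LinearMap.id_coe, id_eq,
      LinearMap.coe_restrictScalars, map_smul]
    exact Submodule.subset_span ⟨r, a, f b, rfl⟩

/-! ## Separable equivalence -/

/-- A separable equivalence between rings `Λ` and `Γ`, given by a `(Λ,Γ)`-bimodule `M` and a
`(Γ,Λ)`-bimodule `N`, each finitely generated and projective as a one-sided module on either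
side, together with a `Λ`-bimodule isomorphism `M ⊗[Γ] N ≅ Λ ⊕ X` and a `Γ`-bimodule
isomorphism `N ⊗[Λ] M ≅ Γ ⊕ Y`.  The compatibility with the right actions is recorded on
elementary tensors (which generate the tensor product). -/
structure SepEq (Λ Γ : Type) [Ring Λ] [Ring Γ]
    (M : Type) [AddCommGroup M] [Module Λ M] [Module Γᵐᵒᵖ M] [SMulCommClass Γᵐᵒᵖ Λ M]
    (N : Type) [AddCommGroup N] [Module Γ N] [Module Λᵐᵒᵖ N] [SMulCommClass Λᵐᵒᵖ Γ N]
    (X : Type) [AddCommGroup X] [Module Λ X] [Module Λᵐᵒᵖ X] [SMulCommClass Λᵐᵒᵖ Λ X]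
    (Y : Type) [AddCommGroup Y] [Module Γ Y] [Module Γᵐᵒᵖ Y] [SMulCommClass Γᵐᵒᵖ Γ Y] :
    Type where
  finite_left_M : Module.Finite Λ M
  projective_left_M : Module.Projective Λ M
  finite_right_M : Module.Finite Γᵐᵒᵖ M
  projective_right_M : Module.Projective Γᵐᵒᵖ M
  finite_left_N : Module.Finite Γ N
  projective_left_N : Module.Projective Γ N
  finite_right_N : Module.Finite Λᵐᵒᵖ N
  projective_right_N : Module.Projective Λᵐᵒᵖ N
  /-- the left `Λ`-linear isomorphism `M ⊗[Γ] N ≅ Λ ⊕ X` -/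
  e : BT Λ Γ M N ≃ₗ[Λ] Λ × X
  /-- `e` is also right `Λ`-linear, i.e. it is a `Λ`-bimodule isomorphism -/
  e_right : ∀ (m : M) (n : N) (l : Λ),
    e (btmul Λ Γ M N m (op l • n)) = op l • e (btmul Λ Γ M N m n)
  /-- the left `Γ`-linear isomorphism `N ⊗[Λ] M ≅ Γ ⊕ Y` -/
  f : BT Γ Λ N M ≃ₗ[Γ] Γ × Y
  /-- `f` is also right `Γ`-linear, i.e. it is a `Γ`-bimodule isomorphism -/
  f_right : ∀ (n : N) (m : M) (g : Γ),
    f (btmul Γ Λ N M n (op g • m)) = op g • f (btmul Γ Λ N M n m)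

/-! ## Ext, orthogonal classes, (co)resolutions, Gorenstein categories -/

/-- `Ext^i_R(A, C) = 0` for all `i ≥ 1`. -/
def extVanishes (R : Type) [Ring R] (A C : Type) [AddCommGroup A] [Module R A]
    [AddCommGroup C] [Module R C] : Prop :=
  ∀ i : ℕ, 1 ≤ i →
    Subsingleton (((Ext ℤ (ModuleCat R) i).obj (Opposite.op (ModuleCat.of R A))).obj
      (ModuleCat.of R C))

/-- The left orthogonal class `⊥𝒞 = {A ∣ Ext^{≥1}(A, C) = 0 for all C ∈ 𝒞}`. -/
def leftPerp (R : Type) [Ring R] (𝒞 : Set (ModuleCat.{0} R)) : Set (ModuleCat.{0} R) :=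
  {A | ∀ C ∈ 𝒞, extVanishes R A C}

/-- The right orthogonal class `𝒞⊥ = {A ∣ Ext^{≥1}(C, A) = 0 for all C ∈ 𝒞}`. -/
def rightPerp (R : Type) [Ring R] (𝒞 : Set (ModuleCat.{0} R)) : Set (ModuleCat.{0} R) :=
  {A | ∀ C ∈ 𝒞, extVanishes R C A}

/-- A class of modules is self-orthogonal if `Ext^{≥1}(C, C') = 0` for all its members. -/
def SelfOrthClass (R : Type) [Ring R] (𝒞 : Set (ModuleCat.{0} R)) : Prop :=
  ∀ C ∈ 𝒞, ∀ C' ∈ 𝒞, extVanishes R C C'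

/-- Membership in `cores 𝒞̃`: `A` admits an exact sequence `0 → A → C^0 → C^1 → ⋯` with all
`C^i ∈ 𝒞` which stays exact after applying `Hom(-, C)` for every `C ∈ 𝒞`. -/
def MemCores (R : Type) [Ring R] (𝒞 : Set (ModuleCat.{0} R)) (A : ModuleCat.{0} R) : Prop :=
  ∃ (P : ℕ → ModuleCat.{0} R) (ι : A →ₗ[R] P 0) (d : ∀ i : ℕ, P i →ₗ[R] P (i + 1)),
    (∀ i, P i ∈ 𝒞) ∧ Function.Injective ⇑ι ∧ Function.Exact ⇑ι ⇑(d 0) ∧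
    (∀ i, Function.Exact ⇑(d i) ⇑(d (i + 1))) ∧
    (∀ C ∈ 𝒞,
      Function.Surjective (fun g : P 0 →ₗ[R] C => g ∘ₗ ι) ∧
      Function.Exact (fun g : P 1 →ₗ[R] C => g ∘ₗ d 0) (fun g : P 0 →ₗ[R] C => g ∘ₗ ι) ∧
      ∀ i, Function.Exact (fun g : P (i + 2) →ₗ[R] C => g ∘ₗ d (i + 1))
        (fun g : P (i + 1) →ₗ[R] C => g ∘ₗ d i))

/-- Membership in `res 𝒞̃`: `A` admits an exact sequence `⋯ → C_1 → C_0 → A → 0` with all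
`C_i ∈ 𝒞` which stays exact after applying `Hom(C, -)` for every `C ∈ 𝒞`. -/
def MemRes (R : Type) [Ring R] (𝒞 : Set (ModuleCat.{0} R)) (A : ModuleCat.{0} R) : Prop :=
  ∃ (P : ℕ → ModuleCat.{0} R) (π : P 0 →ₗ[R] A) (d : ∀ i : ℕ, P (i + 1) →ₗ[R] P i),
    (∀ i, P i ∈ 𝒞) ∧ Function.Surjective ⇑π ∧ Function.Exact ⇑(d 0) ⇑π ∧
    (∀ i, Function.Exact ⇑(d (i + 1)) ⇑(d i)) ∧
    (∀ C ∈ 𝒞,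
      Function.Surjective (fun g : C →ₗ[R] P 0 => π ∘ₗ g) ∧
      Function.Exact (fun g : C →ₗ[R] P 1 => d 0 ∘ₗ g) (fun g : C →ₗ[R] P 0 => π ∘ₗ g) ∧
      ∀ i, Function.Exact (fun g : C →ₗ[R] P (i + 2) => d (i + 1) ∘ₗ g)
        (fun g : C →ₗ[R] P (i + 1) => d i ∘ₗ g))

/-- The right Gorenstein category `r𝒢(𝒞) = ⊥𝒞 ∩ cores 𝒞̃`. -/
def rGor (R : Type) [Ring R] (𝒞 : Set (ModuleCat.{0} R)) : Set (ModuleCat.{0} R) :=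
  {A | A ∈ leftPerp R 𝒞 ∧ MemCores R 𝒞 A}

/-- The left Gorenstein category `l𝒢(𝒞) = 𝒞⊥ ∩ res 𝒞̃`. -/
def lGor (R : Type) [Ring R] (𝒞 : Set (ModuleCat.{0} R)) : Set (ModuleCat.{0} R) :=
  {A | A ∈ rightPerp R 𝒞 ∧ MemRes R 𝒞 A}

/-- Membership in the Gorenstein category `𝒢(𝒞)`: there is an exact complex with all terms
in `𝒞`, which is both `Hom(𝒞, -)`-exact and `Hom(-, 𝒞)`-exact, such that `A` is isomorphic
to one of its images. -/
def MemGor (R : Type) [Ring R] (𝒞 : Set (ModuleCat.{0} R)) (A : ModuleCat.{0} R) : Prop :=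
  ∃ (P : ℤ → ModuleCat.{0} R) (d : ∀ i : ℤ, P i →ₗ[R] P (i + 1)),
    (∀ i, P i ∈ 𝒞) ∧ (∀ i, Function.Exact ⇑(d i) ⇑(d (i + 1))) ∧
    (∀ C ∈ 𝒞, ∀ i : ℤ, Function.Exact (fun g : P (i + 1 + 1) →ₗ[R] C => g ∘ₗ d (i + 1))
      (fun g : P (i + 1) →ₗ[R] C => g ∘ₗ d i)) ∧
    (∀ C ∈ 𝒞, ∀ i : ℤ, Function.Exact (fun g : C →ₗ[R] P i => d i ∘ₗ g)
      (fun g : C →ₗ[R] P (i + 1) => d (i + 1) ∘ₗ g)) ∧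
    Nonempty (A ≃ₗ[R] LinearMap.range (d 0))

/-- The class of projective left `R`-modules. -/
def projClass (R : Type) [Ring R] : Set (ModuleCat.{0} R) :=
  {P | Module.Projective R P}

/-- The image class `T_A(𝒞)`: the class of left `S`-modules isomorphic to `A ⊗[R] C`
for some `C ∈ 𝒞`. -/
def tensorClass (S R : Type) [Ring S] [Ring R]
    (A : Type) [AddCommGroup A] [Module S A] [Module Rᵐᵒᵖ A] [SMulCommClass Rᵐᵒᵖ S A]
    (𝒞 : Set (ModuleCat.{0} R)) : Set (ModuleCat.{0} S) :=
  {D | ∃ C ∈ 𝒞, Nonempty (D ≃ₗ[S] BT S R A C)}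

/-- `Add C`: the class of modules isomorphic to direct summands of arbitrary direct sums of
copies of `C`. -/
def AddClass (R : Type) [Ring R] (C : Type) [AddCommGroup C] [Module R C] :
    Set (ModuleCat.{0} R) :=
  {D | ∃ (ι : Type) (s : D →ₗ[R] (ι →₀ C)) (r : (ι →₀ C) →ₗ[R] D), r ∘ₗ s = LinearMap.id}

/-- `add C`: the class of modules isomorphic to direct summands of finite direct sums of
copies of `C`. -/
def addClass (R : Type) [Ring R] (C : Type) [AddCommGroup C] [Module R C] :
    Set (ModuleCat.{0} R) :=
  {D | ∃ (n : ℕ) (s : D →ₗ[R] (Fin n → C)) (r : (Fin n → C) →ₗ[R] D), r ∘ₗ s = LinearMap.id}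

/-- An additive subcategory of `Mod R` closed under isomorphisms, viewed as a class of
modules: it is closed under isomorphisms, contains a zero module and is closed under finite
direct sums. -/
structure IsAdditiveSubcat (R : Type) [Ring R] (𝒞 : Set (ModuleCat.{0} R)) : Prop where
  iso_mem : ∀ {A B : ModuleCat.{0} R}, A ∈ 𝒞 → Nonempty (A ≃ₗ[R] B) → B ∈ 𝒞
  zero_mem : ModuleCat.of R PUnit ∈ 𝒞
  sum_mem : ∀ {A B : ModuleCat.{0} R}, A ∈ 𝒞 → B ∈ 𝒞 → ModuleCat.of R (A × B) ∈ 𝒞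

/-- `M` is a projective generator: it is projective and the ring is a direct summand of a
finite direct sum of copies of `M`. -/
def IsProjectiveGenerator (R : Type) [Ring R] (M : Type) [AddCommGroup M] [Module R M] :
    Prop :=
  Module.Projective R M ∧
    ∃ (n : ℕ) (s : R →ₗ[R] (Fin n → M)) (r : (Fin n → M) →ₗ[R] R), r ∘ₗ s = LinearMap.id

/-- `G` is Gorenstein projective: `G` is an image of a totally acyclic complex of
projectives, i.e. an exact complex of projective modules which stays exact after applying
`Hom(-, P)` for every projective module `P`. -/
def IsGorensteinProjective (R : Type) [Ring R] (G : Type) [AddCommGroup G] [Module R G] :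
    Prop :=
  ∃ (P : ℤ → ModuleCat.{0} R) (d : ∀ i : ℤ, P i →ₗ[R] P (i + 1)),
    (∀ i, Module.Projective R (P i)) ∧ (∀ i, Function.Exact ⇑(d i) ⇑(d (i + 1))) ∧
    (∀ (Q : ModuleCat.{0} R), Module.Projective R Q → ∀ i : ℤ,
      Function.Exact (fun g : P (i + 1 + 1) →ₗ[R] Q => g ∘ₗ d (i + 1))
        (fun g : P (i + 1) →ₗ[R] Q => g ∘ₗ d i)) ∧
    Nonempty (G ≃ₗ[R] LinearMap.range (d 0))

/-- `G` is Gorenstein injective: `G` is an image of an exact complex of injective modules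
which stays exact after applying `Hom(I, -)` for every injective module `I`. -/
def IsGorensteinInjective (R : Type) [Ring R] (G : Type) [AddCommGroup G] [Module R G] :
    Prop :=
  ∃ (P : ℤ → ModuleCat.{0} R) (d : ∀ i : ℤ, P i →ₗ[R] P (i + 1)),
    (∀ i, Module.Injective R (P i)) ∧ (∀ i, Function.Exact ⇑(d i) ⇑(d (i + 1))) ∧
    (∀ (I : ModuleCat.{0} R), Module.Injective R I → ∀ i : ℤ,
      Function.Exact (fun g : I →ₗ[R] P i => d i ∘ₗ g)
        (fun g : I →ₗ[R] P (i + 1) => d (i + 1) ∘ₗ g)) ∧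
    Nonempty (G ≃ₗ[R] LinearMap.range (d 0))

/-- `C` is a Wakamatsu tilting left `R`-module: `C` is self-orthogonal, admits a resolution
by finitely generated projective modules, and there is an exact sequence
`0 → R → C^0 → C^1 → ⋯` with all `C^i ∈ add C` which stays exact under `Hom(-, add C)`. -/
def IsWakamatsuTilting (R : Type) [Ring R] (C : Type) [AddCommGroup C] [Module R C] :
    Prop :=
  extVanishes R C C ∧
  (∃ (P : ℕ → ModuleCat.{0} R) (π : P 0 →ₗ[R] C) (d : ∀ i : ℕ, P (i + 1) →ₗ[R] P i),
    (∀ i, Module.Finite R (P i) ∧ Module.Projective R (P i)) ∧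
    Function.Surjective ⇑π ∧ Function.Exact ⇑(d 0) ⇑π ∧
    (∀ i, Function.Exact ⇑(d (i + 1)) ⇑(d i))) ∧
  MemCores R (addClass R C) (ModuleCat.of R R)

end

noncomputable section

-- basic lemmas
section basic
variable (S R : Type) [Ring S] [Ring R]
    (A : Type) [AddCommGroup A] [Module S A] [Module Rᵐᵒᵖ A] [SMulCommClass Rᵐᵒᵖ S A]
    (B : Type) [AddCommGroup B] [Module R B]

lemma btmul_add_left (a a' : A) (b : B) :
    btmul S R A B (a + a') b = btmul S R A B a b + btmul S R A B a' b := by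
  simp [btmul, add_tmul, Submodule.Quotient.mk_add]
  rfl

lemma btmul_add_right (a : A) (b b' : B) :
    btmul S R A B a (b + b') = btmul S R A B a b + btmul S R A B a b' := by
  simp [btmul, tmul_add, Submodule.Quotient.mk_add]
  rfl

lemma btmul_smul_left (s : S) (a : A) (b : B) :
    btmul S R A B (s • a) b = s • btmul S R A B a b := by
  show (Submodule.Quotient.mk ((s • a) ⊗ₜ[ℤ] b) : (A ⊗[ℤ] B) ⧸ BTrel S R A B)
    = s • Submodule.Quotient.mk (a ⊗ₜ[ℤ] b)
  exact (congrArg (Submodule.Quotient.mk (p := BTrel S R A B))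
    (TensorProduct.smul_tmul' s a b).symm).trans (Submodule.Quotient.mk_smul _ s _)

lemma btmul_rel (r : R) (a : A) (b : B) :
    btmul S R A B (op r • a) b = btmul S R A B a (r • b) := by
  show (Submodule.Quotient.mk ((op r • a) ⊗ₜ[ℤ] b) : (A ⊗[ℤ] B) ⧸ BTrel S R A B)
    = Submodule.Quotient.mk (a ⊗ₜ[ℤ] (r • b))
  rw [Submodule.Quotient.eq]
  exact Submodule.subset_span ⟨r, a, b, rfl⟩

lemma BT.ext_apply {T : Type} [AddCommMonoid T] (φ ψ : BT S R A B →+ T)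
    (h : ∀ a b, φ (btmul S R A B a b) = ψ (btmul S R A B a b)) : ∀ x, φ x = ψ x := by
  intro x
  obtain ⟨y, rfl⟩ := Submodule.Quotient.mk_surjective _ x
  induction y using TensorProduct.induction_on with
  | zero => exact (map_zero φ).trans (map_zero ψ).symm
  | tmul a b => exact h a b
  | add u v hu hv =>
      have := map_add φ (Submodule.Quotient.mk u) (Submodule.Quotient.mk v)
      exact this.trans ((congrArg₂ (· + ·) hu hv).trans (map_add ψ _ _).symm)
end basic
lemma btmap_btmul (S R : Type) [Ring S] [Ring R]
    (A : Type) [AddCommGroup A] [Module S A] [Module Rᵐᵒᵖ A] [SMulCommClass Rᵐᵒᵖ S A]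
    {B B' : Type} [AddCommGroup B] [Module R B] [AddCommGroup B'] [Module R B']
    (f : B →ₗ[R] B') (a : A) (b : B) :
    btmap S R A f (btmul S R A B a b) = btmul S R A B' a (f b) := by
  show (Submodule.mapQ _ _ _ _) (Submodule.Quotient.mk _) = _
  rw [Submodule.mapQ_apply]
  simp [btmul]
section main
variable {Λ Γ : Type} [Ring Λ] [Ring Γ]
    {M : Type} [AddCommGroup M] [Module Λ M] [Module Γᵐᵒᵖ M] [SMulCommClass Γᵐᵒᵖ Λ M]
    {N : Type} [AddCommGroup N] [Module Γ N] [Module Λᵐᵒᵖ N] [SMulCommClass Λᵐᵒᵖ Γ N]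
    {X : Type} [AddCommGroup X] [Module Λ X] [Module Λᵐᵒᵖ X] [SMulCommClass Λᵐᵒᵖ Λ X]
    {Y : Type} [AddCommGroup Y] [Module Γ Y] [Module Γᵐᵒᵖ Y] [SMulCommClass Γᵐᵒᵖ Γ Y]
    (sep : SepEq Λ Γ M N X Y)
    (D : Type) [AddCommGroup D] [Module Γ D]

/-- the coefficient `(f(n ⊗ m))_Γ`. -/
def coef (n : N) (m : M) : Γ := (sep.f (btmul Γ Λ N M n m)).1

lemma coef_add_left (n n' : N) (m : M) :
    coef sep (n + n') m = coef sep n m + coef sep n' m := by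
  simp [coef, btmul_add_left]

lemma coef_add_right (n : N) (m m' : M) :
    coef sep n (m + m') = coef sep n m + coef sep n m' := by
  simp [coef, btmul_add_right]

lemma coef_gsmul (g : Γ) (n : N) (m : M) :
    coef sep (g • n) m = g * coef sep n m := by
  simp [coef, btmul_smul_left, Prod.smul_fst, smul_eq_mul]

lemma coef_op_right (g : Γ) (n : N) (m : M) :
    coef sep n (op g • m) = coef sep n m * g := by
  simp [coef, sep.f_right, Prod.smul_fst, MulOpposite.smul_eq_mul_unop]

lemma coef_lam (a : Λ) (n : N) (m : M) :
    coef sep (op a • n) m = coef sep n (a • m) := by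
  simp [coef, btmul_rel]

end main

section main2
variable {Λ Γ : Type} [Ring Λ] [Ring Γ]
    {M : Type} [AddCommGroup M] [Module Λ M] [Module Γᵐᵒᵖ M] [SMulCommClass Γᵐᵒᵖ Λ M]
    {N : Type} [AddCommGroup N] [Module Γ N] [Module Λᵐᵒᵖ N] [SMulCommClass Λᵐᵒᵖ Γ N]
    {X : Type} [AddCommGroup X] [Module Λ X] [Module Λᵐᵒᵖ X] [SMulCommClass Λᵐᵒᵖ Λ X]
    {Y : Type} [AddCommGroup Y] [Module Γ Y] [Module Γᵐᵒᵖ Y] [SMulCommClass Γᵐᵒᵖ Γ Y]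
    (sep : SepEq Λ Γ M N X Y)
    (D : Type) [AddCommGroup D] [Module Γ D]

/-- `n ↦ coef n m • d` as a `ℤ`-linear map. -/
def innerElt (m : M) (d : D) : N →ₗ[ℤ] D :=
  (AddMonoidHom.mk' (fun n => coef sep n m • d)
    (fun n n' => by simp only [coef_add_left, add_smul])).toIntLinearMap

@[simp] lemma innerElt_apply (m : M) (d : D) (n : N) :
    innerElt sep D m d n = coef sep n m • d := rfl

def inner1 (m : M) : D →ₗ[ℤ] (N →ₗ[ℤ] D) :=
  (AddMonoidHom.mk' (fun d => innerElt sep D m d)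
    (fun d d' => by ext n; simp [smul_add])).toIntLinearMap

/-- the `ℤ`-bilinear lift `M ⊗[ℤ] D →ₗ (N →ₗ D)`, `(m ⊗ d) ↦ (n ↦ coef n m • d)`. -/
def bigInner : (M ⊗[ℤ] D) →ₗ[ℤ] (N →ₗ[ℤ] D) :=
  TensorProduct.lift (AddMonoidHom.mk' (fun m => inner1 sep D m)
    (fun m m' => by ext d n; simp [inner1, coef_add_right, add_smul])).toIntLinearMap

@[simp] lemma bigInner_tmul (m : M) (d : D) (n : N) :
    bigInner sep D (m ⊗ₜ[ℤ] d) n = coef sep n m • d := rfl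

lemma bigInner_lamsmul (a : Λ) (x : M ⊗[ℤ] D) (n : N) :
    bigInner sep D (a • x) n = bigInner sep D x (op a • n) := by
  induction x using TensorProduct.induction_on with
  | zero => simp
  | tmul m d => rw [TensorProduct.smul_tmul']; simp [coef_lam]
  | add u v hu hv => rw [smul_add]; simp only [map_add, LinearMap.add_apply, hu, hv]

lemma bigInner_vanish (x : M ⊗[ℤ] D) (hx : x ∈ BTrel Λ Γ M D) : bigInner sep D x = 0 := by
  induction hx using Submodule.span_induction with
  | mem x hx =>
      obtain ⟨g, m, d, rfl⟩ := hx
      ext n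
      simp [coef_op_right, mul_smul]
  | zero => simp
  | add u v _ _ hu hv => simp [map_add, hu, hv]
  | smul a u _ hu => ext n; rw [bigInner_lamsmul]; simp [hu]

/-- the descended map `M ⊗[Γ] D → (N →ₗ D)`. -/
def Wfun : BT Λ Γ M D → (N →ₗ[ℤ] D) := fun z =>
  Quotient.liftOn' z (fun x => bigInner sep D x) (by
    intro x y h
    rw [Submodule.quotientRel_def] at h
    have h2 := bigInner_vanish sep D _ h
    rw [map_sub] at h2
    exact sub_eq_zero.mp h2)

@[simp] lemma Wfun_mk (x : M ⊗[ℤ] D) :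
    Wfun sep D (Submodule.Quotient.mk x) = bigInner sep D x := rfl

lemma Wfun_add (z z' : BT Λ Γ M D) :
    Wfun sep D (z + z') = Wfun sep D z + Wfun sep D z' := by
  obtain ⟨x, rfl⟩ := Submodule.Quotient.mk_surjective _ z
  obtain ⟨y, rfl⟩ := Submodule.Quotient.mk_surjective _ z'
  show Wfun sep D (Submodule.Quotient.mk (x + y)) = _
  rw [Wfun_mk, Wfun_mk, Wfun_mk, map_add]

lemma Wfun_gsmul (g : Γ) (z : BT Λ Γ M D) (n : N) :
    Wfun sep D z (g • n) = g • Wfun sep D z n := by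
  obtain ⟨x, rfl⟩ := Submodule.Quotient.mk_surjective _ z
  rw [Wfun_mk]
  induction x using TensorProduct.induction_on with
  | zero => simp
  | tmul m d => simp [coef_gsmul, mul_smul]
  | add u v hu hv => simp only [map_add, LinearMap.add_apply, hu, hv, smul_add]

lemma Wfun_lamsmul (a : Λ) (z : BT Λ Γ M D) (n : N) :
    Wfun sep D (a • z) n = Wfun sep D z (op a • n) := by
  obtain ⟨x, rfl⟩ := Submodule.Quotient.mk_surjective _ z
  show Wfun sep D (Submodule.Quotient.mk (a • x)) n = _
  rw [Wfun_mk, Wfun_mk, bigInner_lamsmul]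

/-- `z ↦ Wfun z n` as a `ℤ`-linear map. -/
def rInner (n : N) : BT Λ Γ M D →ₗ[ℤ] D :=
  (AddMonoidHom.mk' (fun z => Wfun sep D z n)
    (fun z z' => by show Wfun sep D (z + z') n = _; rw [Wfun_add]; rfl)).toIntLinearMap

def r0 : N ⊗[ℤ] BT Λ Γ M D →ₗ[ℤ] D :=
  TensorProduct.lift (AddMonoidHom.mk' (fun n => rInner sep D n)
    (fun n n' => by ext z; exact map_add (Wfun sep D z) n n')).toIntLinearMap

@[simp] lemma r0_tmul (n : N) (z : BT Λ Γ M D) :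
    r0 sep D (n ⊗ₜ[ℤ] z) = Wfun sep D z n := rfl

lemma r0_gsmul (g : Γ) (x : N ⊗[ℤ] BT Λ Γ M D) :
    r0 sep D (g • x) = g • r0 sep D x := by
  induction x using TensorProduct.induction_on with
  | zero => simp
  | tmul n z => rw [TensorProduct.smul_tmul']; simp [Wfun_gsmul]
  | add u v hu hv => rw [smul_add, map_add, map_add, hu, hv, smul_add]

def r1 : N ⊗[ℤ] BT Λ Γ M D →ₗ[Γ] D where
  toFun := r0 sep D
  map_add' := map_add _
  map_smul' := r0_gsmul sep D

/-- the retraction `N ⊗[Λ] (M ⊗[Γ] D) → D`. -/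
def rMap : BT Γ Λ N (BT Λ Γ M D) →ₗ[Γ] D :=
  Submodule.liftQ (BTrel Γ Λ N (BT Λ Γ M D)) (r1 sep D) (by
    rw [BTrel, Submodule.span_le]
    rintro x ⟨a, n, z, rfl⟩
    simp only [SetLike.mem_coe, LinearMap.mem_ker, map_sub]
    show r0 sep D _ - r0 sep D _ = 0
    rw [r0_tmul, r0_tmul, Wfun_lamsmul, sub_self])

@[simp] lemma rMap_btmul (n : N) (z : BT Λ Γ M D) :
    rMap sep D (btmul Γ Λ N (BT Λ Γ M D) n z) = Wfun sep D z n := rfl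

/-- `m ↦ m ⊗ d`. -/
def incl (d : D) : M →ₗ[Λ] BT Λ Γ M D where
  toFun m := btmul Λ Γ M D m d
  map_add' m m' := btmul_add_left Λ Γ M D m m' d
  map_smul' a m := btmul_smul_left Λ Γ M D a m d

def Phi (d : D) : BT Γ Λ N M →ₗ[Γ] BT Γ Λ N (BT Λ Γ M D) :=
  btmap Γ Λ N (incl D d)

lemma Phi_btmul (d : D) (n : N) (m : M) :
    Phi D d (btmul Γ Λ N M n m)
      = btmul Γ Λ N (BT Λ Γ M D) n (btmul Λ Γ M D m d) :=
  btmap_btmul Γ Λ N (incl D d) n m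

/-- right multiplication by `γ` on `M`. -/
def rmul (g : Γ) : M →ₗ[Λ] M where
  toFun m := op g • m
  map_add' := smul_add _
  map_smul' a m := (smul_comm (op g) a m).symm ▸ rfl

lemma Phi_gamma (g : Γ) (d : D) (x : BT Γ Λ N M) :
    Phi D (g • d) x = Phi D d (btmap Γ Λ N (rmul (M := M) (Λ := Λ) g) x) := by
  refine BT.ext_apply Γ Λ N M (Phi D (g • d)).toAddMonoidHom
    (((Phi D d).comp (btmap Γ Λ N (rmul g))).toAddMonoidHom) (fun n m => ?_) x
  show Phi D (g • d) (btmul Γ Λ N M n m)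
    = Phi D d (btmap Γ Λ N (rmul g) (btmul Γ Λ N M n m))
  rw [Phi_btmul, btmap_btmul, Phi_btmul]
  show _ = btmul Γ Λ N (BT Λ Γ M D) n (btmul Λ Γ M D (op g • m) d)
  rw [btmul_rel Λ Γ M D g m d]

lemma f_rho (g : Γ) (x : BT Γ Λ N M) :
    sep.f (btmap Γ Λ N (rmul (M := M) (Λ := Λ) g) x) = op g • sep.f x := by
  refine BT.ext_apply Γ Λ N M
    ((sep.f.toLinearMap.comp (btmap Γ Λ N (rmul g))).toAddMonoidHom)
    ((DistribMulAction.toAddMonoidHom _ (op g)).comp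
      sep.f.toLinearMap.toAddMonoidHom) (fun n m => ?_) x
  show sep.f (btmap Γ Λ N (rmul g) (btmul Γ Λ N M n m)) = op g • sep.f (btmul Γ Λ N M n m)
  rw [btmap_btmul]
  exact sep.f_right n m g

lemma rho_u (g : Γ) :
    btmap Γ Λ N (rmul (M := M) (Λ := Λ) g) (sep.f.symm ((1 : Γ), (0 : Y)))
      = g • sep.f.symm ((1 : Γ), (0 : Y)) := by
  apply sep.f.injective
  rw [f_rho, map_smul, LinearEquiv.apply_symm_apply]
  apply Prod.ext <;>
    simp [MulOpposite.smul_eq_mul_unop, smul_eq_mul]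

/-- the section `D → N ⊗[Λ] (M ⊗[Γ] D)`. -/
def sMap : D →ₗ[Γ] BT Γ Λ N (BT Λ Γ M D) where
  toFun d := Phi D d (sep.f.symm ((1 : Γ), (0 : Y)))
  map_add' d d' := by
    refine BT.ext_apply Γ Λ N M (Phi D (d + d')).toAddMonoidHom
      ((Phi D d).toAddMonoidHom + (Phi D d').toAddMonoidHom) (fun n m => ?_) _
    show Phi D (d + d') (btmul Γ Λ N M n m)
      = Phi D d (btmul Γ Λ N M n m) + Phi D d' (btmul Γ Λ N M n m)
    rw [Phi_btmul, Phi_btmul, Phi_btmul, btmul_add_right Λ Γ M D m d d',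
      btmul_add_right]
  map_smul' g d := by
    show Phi D (g • d) _ = g • Phi D d _
    rw [Phi_gamma, rho_u, map_smul]

lemma rMap_sMap (d : D) : rMap sep D (sMap sep D d) = d := by
  have key : ∀ x : BT Γ Λ N M, rMap sep D (Phi D d x) = (sep.f x).1 • d := by
    refine BT.ext_apply Γ Λ N M ((rMap sep D).comp (Phi D d)).toAddMonoidHom
      (AddMonoidHom.mk' (fun x => (sep.f x).1 • d)
        (fun x y => by
          show (sep.f (x + y)).1 • d = (sep.f x).1 • d + (sep.f y).1 • d
          rw [map_add, Prod.fst_add, add_smul]))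
      (fun n m => ?_)
    show rMap sep D (Phi D d (btmul Γ Λ N M n m)) = (sep.f (btmul Γ Λ N M n m)).1 • d
    rw [Phi_btmul, rMap_btmul]
    rfl
  show rMap sep D (Phi D d _) = d
  rw [key, LinearEquiv.apply_symm_apply, one_smul]

end main2
lemma subsingleton_of_retract {R : Type} [Ring R] {A B : ModuleCat.{0} R} (i : ℕ)
    (L : ModuleCat.{0} R) (s : A ⟶ B) (r : B ⟶ A) (h : s ≫ r = 𝟙 A)
    (hB : Subsingleton (((Ext ℤ (ModuleCat R) i).obj (Opposite.op L)).obj B)) :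
    Subsingleton (((Ext ℤ (ModuleCat R) i).obj (Opposite.op L)).obj A) := by
  set F := (Ext ℤ (ModuleCat R) i).obj (Opposite.op L)
  have hc : F.map s ≫ F.map r = 𝟙 (F.obj A) := by rw [← F.map_comp, h, F.map_id]
  constructor
  intro x y
  have hx : (F.map r) ((F.map s) x) = x := by
    have := congrArg (fun f => f x)
      (congrArg (fun (g : F.obj A ⟶ F.obj A) => (g : F.obj A → F.obj A)) hc)
    simpa using this
  have hy : (F.map r) ((F.map s) y) = y := by
    have := congrArg (fun f => f y)
      (congrArg (fun (g : F.obj A ⟶ F.obj A) => (g : F.obj A → F.obj A)) hc)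
    simpa using this
  rw [← hx, ← hy, Subsingleton.elim ((F.map s) x) ((F.map s) y)]

end
theorem separable_equivalence_leftPerp_descends (Λ Γ : Type) [Ring Λ] [Ring Γ]
    (M : Type) [AddCommGroup M] [Module Λ M] [Module Γᵐᵒᵖ M] [SMulCommClass Γᵐᵒᵖ Λ M]
    (N : Type) [AddCommGroup N] [Module Γ N] [Module Λᵐᵒᵖ N] [SMulCommClass Λᵐᵒᵖ Γ N]
    (X : Type) [AddCommGroup X] [Module Λ X] [Module Λᵐᵒᵖ X] [SMulCommClass Λᵐᵒᵖ Λ X]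
    (Y : Type) [AddCommGroup Y] [Module Γ Y] [Module Γᵐᵒᵖ Y] [SMulCommClass Γᵐᵒᵖ Γ Y]
    (sep : SepEq Λ Γ M N X Y)
    (𝒞 : Set (ModuleCat.{0} Λ)) (h𝒞 : IsAdditiveSubcat Λ 𝒞)
    (𝒟 : Set (ModuleCat.{0} Γ))
    (hND : tensorClass Γ Λ N 𝒞 ⊆ 𝒟)
    (hMD : ∀ D ∈ 𝒟, ModuleCat.of Λ (BT Λ Γ M D) ∈ 𝒞)
    (L : Type) [AddCommGroup L] [Module Γ L]
    (hL : ModuleCat.of Γ L ∈ leftPerp Γ (tensorClass Γ Λ N 𝒞)) :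
    ModuleCat.of Γ L ∈ leftPerp Γ 𝒟 := by

  intro Dm hDm i hi
  have hC : ModuleCat.of Λ (BT Λ Γ M Dm) ∈ 𝒞 := hMD Dm hDm
  have hB : ModuleCat.of Γ (BT Γ Λ N (BT Λ Γ M Dm)) ∈ tensorClass Γ Λ N 𝒞 :=
    ⟨ModuleCat.of Λ (BT Λ Γ M Dm), hC, ⟨LinearEquiv.refl Γ _⟩⟩
  have hsub := hL _ hB i hi
  refine subsingleton_of_retract i (ModuleCat.of Γ L)
    (A := ModuleCat.of Γ Dm) (B := ModuleCat.of Γ (BT Γ Λ N (BT Λ Γ M Dm)))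
    (ModuleCat.ofHom (sMap sep Dm)) (ModuleCat.ofHom (rMap sep Dm)) ?_ hsub
  ext d
  exact rMap_sMap sep Dm d
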